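/- Let X be a finite set partitioned as X = X₁ ⊔ X₂, and let L be a J-Hermitian matrix on X with L₁₁ ≥ 0, L₂₂ ≥ 0, all of whose principal minors are nonnegative and with 1+L invertible; consider the probability measure Prob{ξ} = det L_ξ / det(1+L) on subsets ξ ⊆ X. Then L₁₁ = 0 and L₂₂ = 0 if and only if the measure is concentrated on configurations ξ with |ξ ∩ X₁| = |ξ ∩ X₂|. -/

import Mathlib

open Matrix
open scoped ComplexOrder

lemma psd_diag_zero_aux {n : Type*} [Fintype n] [DecidableEq n] {A : Matrix n n ℂ}
    (hA : A.PosSemidef) (h : ∀ i, A i i = 0) : A = 0 := by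
  ext j i
  have h0 : star (Pi.single i 1 : n → ℂ) ⬝ᵥ A *ᵥ (Pi.single i 1) = 0 := by
    simp [Matrix.mulVec_single, dotProduct, Pi.single_apply, h,
      Finset.sum_ite_eq, apply_ite]
  have := (hA.dotProduct_mulVec_zero_iff (Pi.single i 1)).mp h0
  have := congrFun this j
  simpa [Matrix.mulVec_single] using this

lemma card_filter_sub {α : Type*} [DecidableEq α] (ξ : Finset α) (p : α → Prop)
    [DecidablePred p] :
    (Finset.univ.filter (fun x : {y // y ∈ ξ} => p ↑x)).card = (ξ.filter p).card := by
  refine Finset.card_bij (fun x _ => (x : α)) ?_ ?_ ?_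
  · rintro ⟨x, hx⟩ h
    simp only [Finset.mem_filter, Finset.mem_univ, true_and] at h
    exact Finset.mem_filter.mpr ⟨hx, h⟩
  · rintro ⟨x, hx⟩ _ ⟨y, hy⟩ _ h
    exact Subtype.ext h
  · intro b hb
    rcases Finset.mem_filter.mp hb with ⟨hb1, hb2⟩
    exact ⟨⟨b, hb1⟩, by simpa using hb2, rfl⟩

/-- Let `L` be a J-Hermitian matrix on `X = X₁ ⊔ X₂` with positive semidefinite diagonal
blocks, whose principal minors are all real and nonnegative, and with `1 + L`
invertible; consider the weights `Prob{ξ} = det L_ξ / det(1+L)` on subsets `ξ`.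
Then `L₁₁ = 0` and `L₂₂ = 0` if and only if the measure is concentrated on the
configurations `ξ` with `|ξ ∩ X₁| = |ξ ∩ X₂|`. -/
theorem stmt_8 {X₁ X₂ : Type*} [Fintype X₁] [DecidableEq X₁] [Fintype X₂] [DecidableEq X₂]
    (L : Matrix (X₁ ⊕ X₂) (X₁ ⊕ X₂) ℂ)
    (h11 : L.toBlocks₁₁.PosSemidef) (h22 : L.toBlocks₂₂.PosSemidef)
    (h12 : L.toBlocks₁₂ᴴ = -L.toBlocks₂₁)
    (minor : Finset (X₁ ⊕ X₂) → ℂ)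
    (hminor : ∀ ξ, minor ξ =
      (L.submatrix (fun i : {x // x ∈ ξ} => (i : X₁ ⊕ X₂))
        (fun j : {x // x ∈ ξ} => (j : X₁ ⊕ X₂))).det)
    (hreal : ∀ ξ, (minor ξ).im = 0) (hnonneg : ∀ ξ, 0 ≤ (minor ξ).re)
    (hinv : IsUnit (1 + L).det) :
    (L.toBlocks₁₁ = 0 ∧ L.toBlocks₂₂ = 0) ↔
      ∀ ξ : Finset (X₁ ⊕ X₂),
        minor ξ / (1 + L).det ≠ 0 →
          (ξ.filter (fun x => x.isLeft = true)).card =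
            (ξ.filter (fun x => x.isRight = true)).card := by
  have hdet : (1 + L).det ≠ 0 := hinv.ne_zero
  constructor
  · rintro ⟨h1, h2⟩ ξ hne
    have hL11 : ∀ i j, L (Sum.inl i) (Sum.inl j) = 0 := fun i j =>
      congrFun (congrFun h1 i) j
    have hL22 : ∀ i j, L (Sum.inr i) (Sum.inr j) = 0 := fun i j =>
      congrFun (congrFun h2 i) j
    have hm : minor ξ ≠ 0 := fun h => hne (by simp [h])
    rw [hminor ξ, Matrix.det_apply] at hm
    obtain ⟨σ, -, hσ⟩ := Finset.exists_ne_zero_of_sum_ne_zero hm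
    have hprod : (∏ i : {x // x ∈ ξ}, L ↑(σ i) ↑i) ≠ 0 := by
      intro h
      apply hσ
      simp only [Matrix.submatrix_apply]
      rw [h, smul_zero]
    have hfac : ∀ x : {x // x ∈ ξ}, L ↑(σ x) ↑x ≠ 0 := by
      rw [Finset.prod_ne_zero_iff] at hprod
      exact fun x => hprod x (Finset.mem_univ x)
    have key : ∀ x : {x // x ∈ ξ}, (↑(σ x) : X₁ ⊕ X₂).isLeft = !(↑x : X₁ ⊕ X₂).isLeft := by
      intro x
      have := hfac x
      rcases hy : (↑(σ x) : X₁ ⊕ X₂) with b | b <;>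
        rcases hx : (↑x : X₁ ⊕ X₂) with a | a <;>
          rw [hy, hx] at this <;> simp_all [hL11, hL22]
    have hle1 : (Finset.univ.filter (fun x : {y // y ∈ ξ} => (↑x : X₁ ⊕ X₂).isLeft = true)).card ≤
        (Finset.univ.filter (fun x : {y // y ∈ ξ} => (↑x : X₁ ⊕ X₂).isRight = true)).card := by
      refine Finset.card_le_card_of_injOn σ ?_ ?_
      · intro x hx
        simp only [Finset.mem_coe, Finset.mem_filter, Finset.mem_univ, true_and] at hx ⊢
        rw [← Sum.not_isLeft, key x, hx]
        simp
      · exact fun a _ b _ h => σ.injective h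
    have hle2 : (Finset.univ.filter (fun x : {y // y ∈ ξ} => (↑x : X₁ ⊕ X₂).isRight = true)).card ≤
        (Finset.univ.filter (fun x : {y // y ∈ ξ} => (↑x : X₁ ⊕ X₂).isLeft = true)).card := by
      refine Finset.card_le_card_of_injOn σ ?_ ?_
      · intro x hx
        simp only [Finset.mem_coe, Finset.mem_filter, Finset.mem_univ, true_and] at hx ⊢
        rw [key x]
        rcases hxx : (↑x : X₁ ⊕ X₂) with a | a
        · rw [hxx] at hx; simp at hx
        · rfl
      · exact fun a _ b _ h => σ.injective h
    have := le_antisymm hle1 hle2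
    rwa [card_filter_sub ξ (fun x => x.isLeft = true),
      card_filter_sub ξ (fun x => x.isRight = true)] at this
  · intro h
    have diag : ∀ x : X₁ ⊕ X₂, L x x = 0 := by
      intro x
      have huniq : ∀ y ∈ ({x} : Finset (X₁ ⊕ X₂)), y = x := by simp
      haveI : Unique {y // y ∈ ({x} : Finset (X₁ ⊕ X₂))} :=
        ⟨⟨⟨x, Finset.mem_singleton_self x⟩⟩, by
          rintro ⟨y, hy⟩
          simp only [Finset.mem_singleton] at hy
          subst hy; rfl⟩
      have hmx : minor {x} = L x x := by
        rw [hminor, Matrix.det_unique]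
        have hd : ((default : {y // y ∈ ({x} : Finset (X₁ ⊕ X₂))}) : X₁ ⊕ X₂) = x :=
          huniq _ (Subtype.property _)
        simp only [Matrix.submatrix_apply, hd]
      have hzero : minor {x} / (1 + L).det = 0 := by
        by_contra hne
        have hcard := h {x} hne
        rcases x with a | a <;>
          simp only [Finset.filter_singleton, Sum.isLeft_inl, Sum.isRight_inl,
            Sum.isLeft_inr, Sum.isRight_inr, if_true, if_false, Finset.card_singleton,
            Finset.card_empty, Bool.false_eq_true, ite_false, ite_true] at hcard <;>
          omega
      rw [div_eq_zero_iff] at hzero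
      rcases hzero with h0 | h0
      · rwa [hmx] at h0
      · exact absurd h0 hdet
    constructor
    · exact psd_diag_zero_aux h11 (fun i => diag (Sum.inl i))
    · exact psd_diag_zero_aux h22 (fun i => diag (Sum.inr i))
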